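/- If G is a claw-free finite simple graph and H is any finite simple graph, then the 2-domination number of the Cartesian product satisfies γ_2(G □ H) ≥ γ(G)γ(H). -/

import Mathlib

open SimpleGraph Finset
open scoped Classical

/-- The closed neighborhood of `v` as a finset. -/
noncomputable def closedNbr {V : Type*} [Fintype V] (G : SimpleGraph V) (v : V) : Finset V :=
  Finset.univ.filter (fun u => u = v ∨ G.Adj u v)

/-- `S` is a dominating set of `G`. -/
def IsDomSet {V : Type*} (G : SimpleGraph V) (S : Finset V) : Prop :=
  ∀ v, v ∉ S → ∃ u ∈ S, G.Adj u v

/-- The domination number γ(G). -/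
noncomputable def domNum (V : Type*) [Fintype V] (G : SimpleGraph V) : ℕ :=
  sInf {n | ∃ S : Finset V, IsDomSet G S ∧ S.card = n}

/-- `S` is an independent dominating set of `G`. -/
def IsIndepDomSet {V : Type*} (G : SimpleGraph V) (S : Finset V) : Prop :=
  IsDomSet G S ∧ ∀ u ∈ S, ∀ v ∈ S, ¬ G.Adj u v

/-- The independent domination number i(G). -/
noncomputable def indepDomNum (V : Type*) [Fintype V] (G : SimpleGraph V) : ℕ :=
  sInf {n | ∃ S : Finset V, IsIndepDomSet G S ∧ S.card = n}

/-- `S` is a 2-dominating set of `G`. -/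
noncomputable def IsTwoDomSet {V : Type*} [Fintype V] (G : SimpleGraph V) (S : Finset V) : Prop :=
  ∀ v, v ∉ S → 2 ≤ (S.filter (fun u => G.Adj u v)).card

/-- The 2-domination number γ₂(G). -/
noncomputable def twoDomNum (V : Type*) [Fintype V] (G : SimpleGraph V) : ℕ :=
  sInf {n | ∃ S : Finset V, IsTwoDomSet G S ∧ S.card = n}

/-- `f` is a {k}-dominating function on `G`. -/
noncomputable def IsKDomFun {V : Type*} [Fintype V] (G : SimpleGraph V) (k : ℕ) (f : V → ℕ) : Prop :=
  (∀ v, f v ≤ k) ∧ ∀ v, k ≤ ∑ u ∈ closedNbr G v, f u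

/-- The {k}-domination number γ_{k}(G). -/
noncomputable def kDomNum (V : Type*) [Fintype V] (G : SimpleGraph V) (k : ℕ) : ℕ :=
  sInf {w | ∃ f : V → ℕ, IsKDomFun G k f ∧ w = ∑ v, f v}

/-- `f` is a weak {k}-dominating function on `G`. -/
noncomputable def IsWeakKDomFun {V : Type*} [Fintype V] (G : SimpleGraph V) (k : ℕ) (f : V → ℕ) : Prop :=
  (∀ v, f v ≤ k) ∧ ∀ v, f v = 0 → k ≤ ∑ u ∈ closedNbr G v, f u

/-- The weak {k}-domination number γ_{w{k}}(G). -/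
noncomputable def weakKDomNum (V : Type*) [Fintype V] (G : SimpleGraph V) (k : ℕ) : ℕ :=
  sInf {w | ∃ f : V → ℕ, IsWeakKDomFun G k f ∧ w = ∑ v, f v}

/-- `G` is claw-free: no induced K_{1,3}. -/
def ClawFree {V : Type*} (G : SimpleGraph V) : Prop :=
  ¬ ∃ v a b c : V, a ≠ b ∧ a ≠ c ∧ b ≠ c ∧
    G.Adj v a ∧ G.Adj v b ∧ G.Adj v c ∧ ¬ G.Adj a b ∧ ¬ G.Adj a c ∧ ¬ G.Adj b c

lemma exists_max_indep {V : Type*} [Fintype V] (G : SimpleGraph V) :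
    ∃ I : Finset V, (∀ u ∈ I, ∀ v ∈ I, ¬ G.Adj u v) ∧ IsDomSet G I := by
  classical
  obtain ⟨I, hImem, hImax⟩ := Finset.exists_max_image
    (Finset.univ.powerset.filter (fun S : Finset V => ∀ u ∈ S, ∀ v ∈ S, ¬ G.Adj u v))
    Finset.card ⟨∅, by simp⟩
  have hIind : ∀ u ∈ I, ∀ v ∈ I, ¬ G.Adj u v := (Finset.mem_filter.1 hImem).2
  refine ⟨I, hIind, fun v hv => ?_⟩
  by_contra hno
  push_neg at hno
  have hins : (insert v I) ∈ Finset.univ.powerset.filter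
      (fun S : Finset V => ∀ u ∈ S, ∀ w ∈ S, ¬ G.Adj u w) := by
    refine Finset.mem_filter.2 ⟨Finset.mem_powerset.2 (Finset.subset_univ _), ?_⟩
    intro u hu w hw h
    rcases Finset.mem_insert.1 hu with h1 | h1
    · subst h1
      rcases Finset.mem_insert.1 hw with h2 | h2
      · subst h2; exact G.loopless.irrefl _ h
      · exact hno w h2 (G.symm.symm _ _ h)
    · rcases Finset.mem_insert.1 hw with h2 | h2
      · subst h2; exact hno u h1 h
      · exact hIind u h1 w h2 h
  have := hImax _ hins
  rw [Finset.card_insert_of_notMem hv] at this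
  omega

lemma indep_nbrs_le_two {V : Type*} (G : SimpleGraph V) (hG : ClawFree G)
    (I : Finset V) (hI : ∀ u ∈ I, ∀ v ∈ I, ¬ G.Adj u v) (x : V) :
    (I.filter (fun g => G.Adj x g)).card ≤ 2 := by
  by_contra h
  push_neg at h
  obtain ⟨a, b, c, ha, hb, hc, hab, hac, hbc⟩ := Finset.two_lt_card_iff.1 h
  simp only [Finset.mem_filter] at ha hb hc
  exact hG ⟨x, a, b, c, hab, hac, hbc, ha.2, hb.2, hc.2,
    hI a ha.1 b hb.1, hI a ha.1 c hc.1, hI b hb.1 c hc.1⟩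

lemma key_bound {V W : Type*} [Fintype V] [Fintype W]
    (G : SimpleGraph V) (H : SimpleGraph W) (hG : ClawFree G)
    (D : Finset (V × W)) (hD : IsTwoDomSet (G □ H) D) :
    domNum V G * domNum W H ≤ D.card := by
  classical
  obtain ⟨I, hIind, hIdom⟩ := exists_max_indep G
  set col : V → Finset W := fun g => Finset.univ.filter (fun h => (g, h) ∈ D) with hcol
  set M : V → Finset W := fun g => Finset.univ.filter
    (fun h => (g, h) ∉ D ∧ 2 ≤ (D.filter (fun p => p.2 = h ∧ G.Adj p.1 g)).card) with hM
  -- Step 1: for every g, col g ∪ M g dominates H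
  have hdomH : ∀ g : V, IsDomSet H (col g ∪ M g) := by
    intro g h hh
    rw [Finset.mem_union] at hh
    push_neg at hh
    obtain ⟨h1, h2⟩ := hh
    have hgh : (g, h) ∉ D := by
      intro hmem
      exact h1 (Finset.mem_filter.2 ⟨Finset.mem_univ _, hmem⟩)
    have hhor : (D.filter (fun p => p.2 = h ∧ G.Adj p.1 g)).card ≤ 1 := by
      by_contra hc
      push_neg at hc
      exact h2 (Finset.mem_filter.2 ⟨Finset.mem_univ _, hgh, hc⟩)
    have h2dom := hD (g, h) hgh
    have hsub : D.filter (fun u => (G □ H).Adj u (g, h)) ⊆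
        D.filter (fun p => p.2 = h ∧ G.Adj p.1 g) ∪
        D.filter (fun p => p.1 = g ∧ H.Adj p.2 h) := by
      intro p hp
      rw [Finset.mem_filter] at hp
      rcases SimpleGraph.boxProd_adj.1 hp.2 with ⟨hadj, heq⟩ | ⟨hadj, heq⟩
      · exact Finset.mem_union_left _ (Finset.mem_filter.2 ⟨hp.1, heq, hadj⟩)
      · exact Finset.mem_union_right _ (Finset.mem_filter.2 ⟨hp.1, heq, hadj⟩)
    have hcard := Finset.card_le_card hsub
    have hcard2 := le_trans hcard (Finset.card_union_le _ _)
    have hvert : 0 < (D.filter (fun p => p.1 = g ∧ H.Adj p.2 h)).card := by omega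
    obtain ⟨p, hp⟩ := Finset.card_pos.1 hvert
    rw [Finset.mem_filter] at hp
    refine ⟨p.2, Finset.mem_union_left _ (Finset.mem_filter.2 ⟨Finset.mem_univ _, ?_⟩), hp.2.2⟩
    rw [← hp.2.1]
    exact hp.1
  have hHle : ∀ g : V, domNum W H ≤ (col g).card + (M g).card := fun g =>
    le_trans (Nat.sInf_le ⟨col g ∪ M g, hdomH g, rfl⟩) (Finset.card_union_le _ _)
  have hGle : domNum V G ≤ I.card := Nat.sInf_le ⟨I, hIdom, rfl⟩
  -- Step 4: sum of column cards
  have hcolsum : ∑ g ∈ I, (col g).card = (D.filter (fun p => p.1 ∈ I)).card := by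
    rw [Finset.card_eq_sum_card_fiberwise (f := Prod.fst) (s := D.filter (fun p => p.1 ∈ I)) (t := I)
      (fun x hx => (Finset.mem_filter.1 hx).2)]
    refine Finset.sum_congr rfl (fun g hg => ?_)
    refine (Finset.card_nbij (fun p => p.2) ?_ ?_ ?_).symm
    · intro p hp
      simp only [Finset.mem_coe, Finset.mem_filter] at hp
      simp only [hcol, Finset.mem_coe, Finset.mem_filter, Finset.mem_univ, true_and]
      rw [← hp.2]
      exact hp.1.1
    · intro p hp q hq hpq
      simp only [Finset.coe_filter, Finset.mem_filter, Set.mem_setOf_eq] at hp hq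
      exact Prod.ext (hp.2.trans hq.2.symm) hpq
    · intro h hh
      simp only [hcol, Finset.coe_filter, Finset.mem_univ, Set.mem_setOf_eq, true_and] at hh
      refine ⟨(g, h), ?_, rfl⟩
      simp only [Finset.mem_coe, Finset.mem_filter]
      exact ⟨⟨hh, hg⟩, trivial⟩
  -- Step 5: double counting
  have hMsum : ∑ g ∈ I, (M g).card ≤ (D.filter (fun p => p.1 ∉ I)).card := by
    have key2 : 2 * ∑ g ∈ I, (M g).card ≤ 2 * (D.filter (fun p => p.1 ∉ I)).card := by
      calc 2 * ∑ g ∈ I, (M g).card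
          = ∑ g ∈ I, ∑ _h ∈ M g, 2 := by
            rw [Finset.mul_sum]
            exact Finset.sum_congr rfl fun g _ => by
              rw [Finset.sum_const, smul_eq_mul, mul_comm]
        _ ≤ ∑ g ∈ I, ∑ h ∈ M g, (D.filter (fun p => p.2 = h ∧ G.Adj p.1 g)).card := by
            refine Finset.sum_le_sum fun g hg => Finset.sum_le_sum fun h hh => ?_
            exact ((Finset.mem_filter.1 hh).2).2
        _ ≤ ∑ g ∈ I, ∑ h : W, (D.filter (fun p => p.2 = h ∧ G.Adj p.1 g)).card :=
            Finset.sum_le_sum fun g hg =>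
              Finset.sum_le_sum_of_subset (Finset.subset_univ _)
        _ = ∑ g ∈ I, ∑ h : W, ∑ p ∈ D, if p.2 = h ∧ G.Adj p.1 g then 1 else 0 := by
            simp only [Finset.card_filter]
        _ = ∑ g ∈ I, ∑ p ∈ D, ∑ h : W, if p.2 = h ∧ G.Adj p.1 g then 1 else 0 :=
            Finset.sum_congr rfl fun g _ => Finset.sum_comm
        _ = ∑ p ∈ D, ∑ g ∈ I, ∑ h : W, if p.2 = h ∧ G.Adj p.1 g then 1 else 0 :=
            Finset.sum_comm
        _ = ∑ p ∈ D, ∑ g ∈ I, if G.Adj p.1 g then 1 else 0 := by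
            refine Finset.sum_congr rfl fun p _ => Finset.sum_congr rfl fun g _ => ?_
            by_cases hc : G.Adj p.1 g
            · simp [hc]
            · simp [hc]
        _ = ∑ p ∈ D, (I.filter (fun g => G.Adj p.1 g)).card := by
            simp only [Finset.card_filter]
        _ ≤ ∑ p ∈ D, (if p.1 ∈ I then 0 else 2) := by
            refine Finset.sum_le_sum fun p _ => ?_
            by_cases hp : p.1 ∈ I
            · simp only [hp, if_true]
              have hempty : I.filter (fun g => G.Adj p.1 g) = ∅ :=
                Finset.filter_eq_empty_iff.2 fun g hg => hIind p.1 hp g hg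
              simp [hempty]
            · simp only [hp, if_false]
              exact indep_nbrs_le_two G hG I hIind p.1
        _ = 2 * (D.filter (fun p => p.1 ∉ I)).card := by
            rw [Finset.card_filter, Finset.mul_sum]
            refine Finset.sum_congr rfl fun p _ => ?_
            by_cases hp : p.1 ∈ I <;> simp [hp]
    omega
  calc domNum V G * domNum W H ≤ I.card * domNum W H :=
        Nat.mul_le_mul_right _ hGle
    _ = ∑ _g ∈ I, domNum W H := by rw [Finset.sum_const, smul_eq_mul]
    _ ≤ ∑ g ∈ I, ((col g).card + (M g).card) := Finset.sum_le_sum fun g _ => hHle g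
    _ = (∑ g ∈ I, (col g).card) + ∑ g ∈ I, (M g).card := Finset.sum_add_distrib
    _ ≤ (D.filter (fun p => p.1 ∈ I)).card + (D.filter (fun p => p.1 ∉ I)).card := by
        rw [hcolsum]
        exact Nat.add_le_add_left hMsum _
    _ = D.card := Finset.card_filter_add_card_filter_not _

theorem stmt8 {V W : Type*} [Fintype V] [Fintype W]
    (G : SimpleGraph V) (H : SimpleGraph W) (hG : ClawFree G) :
    domNum V G * domNum W H ≤ twoDomNum (V × W) (G □ H) := by
  classical
  have hne : {n | ∃ S : Finset (V × W), IsTwoDomSet (G □ H) S ∧ S.card = n}.Nonempty :=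
    ⟨(Finset.univ : Finset (V × W)).card, Finset.univ,
      fun v hv => absurd (Finset.mem_univ v) hv, rfl⟩
  obtain ⟨D, hD, hcard⟩ := Nat.sInf_mem hne
  calc domNum V G * domNum W H ≤ D.card := key_bound G H hG D hD
    _ = twoDomNum (V × W) (G □ H) := hcard
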